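/- In the PhD algorithm on a three-sided PhD market with strict preferences, where on each of the two submarkets a fixed-side optimal (Gale–Shapley) stable matching is used at every iteration, a student's match on the advisor–student market can only improve over iterations: for every τ ≥ 2 and every student s ∈ S^(τ) still participating at iteration τ, μ_AS^(τ)(s) ≥_s μ_AS^(τ−1)(s). Consequently S_m^(τ−1) \ S_u^(τ−1) ⊆ S_m^(τ) for all τ ≥ 2. -/

import Mathlib

open scoped Classical

namespace Stmt3

/-- Strict preferences over partners in `W` plus staying single (`none`), encoded by a
rank function injective on the relevant alternatives; higher rank = more preferred. -/
def StrictPref {β : Type*} (pref : Option β → ℕ) (W : Finset β) : Prop :=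
  Set.InjOn pref (insert none (Option.some '' (W : Set β)))

/-- A (one-to-one) matching on the two-sided market with sides `M` and `W`. -/
structure Matching {α β : Type*} (M : Finset α) (W : Finset β) where
  mu : α → Option β
  nu : β → Option α
  consistent : ∀ m w, mu m = some w ↔ nu w = some m
  suppM : ∀ m, m ∉ M → mu m = none
  suppW : ∀ w, w ∉ W → nu w = none

section TwoSided

variable {α β : Type*} (M : Finset α) (W : Finset β)
  (prefM : α → Option β → ℕ) (prefW : β → Option α → ℕ)

def IndRational (μ : Matching M W) : Prop :=
  (∀ m ∈ M, ∀ w, μ.mu m = some w → prefM m none < prefM m (some w)) ∧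
  (∀ w ∈ W, ∀ m, μ.nu w = some m → prefW w none < prefW w (some m))

def Blocks (μ : Matching M W) (m : α) (w : β) : Prop :=
  m ∈ M ∧ w ∈ W ∧ prefM m (μ.mu m) < prefM m (some w) ∧
    prefW w (μ.nu w) < prefW w (some m)

def Stable (μ : Matching M W) : Prop :=
  IndRational M W prefM prefW μ ∧ ∀ m w, ¬ Blocks M W prefM prefW μ m w

/-- The M-optimal stable matching (Gale–Shapley with the `M` side proposing). -/
def ManOpt (μ : Matching M W) : Prop :=
  Stable M W prefM prefW μ ∧
    ∀ lam : Matching M W, Stable M W prefM prefW lam →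
      ∀ m ∈ M, prefM m (lam.mu m) ≤ prefM m (μ.mu m)

/-- The W-optimal stable matching (Gale–Shapley with the `W` side proposing). -/
def WomanOpt (μ : Matching M W) : Prop :=
  Stable M W prefM prefW μ ∧
    ∀ lam : Matching M W, Stable M W prefM prefW lam →
      ∀ w ∈ W, prefW w (lam.nu w) ≤ prefW w (μ.nu w)

end TwoSided

section Aux

variable {α β : Type*} {M : Finset α} {W W' : Finset β}
  {prefM : α → Option β → ℕ} {prefW : β → Option α → ℕ}

lemma mem_left_of_mu (μ : Matching M W) {m : α} {w : β} (h : μ.mu m = some w) :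
    m ∈ M := by
  by_contra hm
  rw [μ.suppM m hm] at h
  exact nomatch h

lemma mem_right_of_nu (μ : Matching M W) {m : α} {w : β} (h : μ.nu w = some m) :
    w ∈ W := by
  by_contra hw
  rw [μ.suppW w hw] at h
  exact nomatch h

lemma some_mem_dom {γ : Type*} {T : Finset γ} {x : γ} (hx : x ∈ T) :
    (some x : Option γ) ∈ insert none (Option.some '' (T : Set γ)) :=
  Set.mem_insert_iff.2 (Or.inr ⟨x, hx, rfl⟩)

lemma mu_mem_dom (μ : Matching M W) {T : Finset β} (hWT : W ⊆ T) (m : α) :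
    μ.mu m ∈ insert none (Option.some '' (T : Set β)) := by
  cases h : μ.mu m with
  | none => exact Set.mem_insert _ _
  | some w => exact some_mem_dom (hWT (mem_right_of_nu μ ((μ.consistent m w).1 h)))

lemma nu_mem_dom (μ : Matching M W) {T : Finset α} (hMT : M ⊆ T) (w : β) :
    μ.nu w ∈ insert none (Option.some '' (T : Set α)) := by
  cases h : μ.nu w with
  | none => exact Set.mem_insert _ _
  | some m => exact some_mem_dom (hMT (mem_left_of_mu μ ((μ.consistent m w).2 h)))

/-- Lemma A: if `m` strictly prefers his small-market partner, then that partner exists,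
lies in `W'`, and strictly prefers her big-market partner. -/
lemma lemA (hW' : W' ⊆ W)
    (hWp : ∀ w ∈ W, StrictPref (prefW w) M)
    (μ : Matching M W) (μ' : Matching M W')
    (hμ : Stable M W prefM prefW μ)
    {m : α} (hm : m ∈ M)
    (hlt : prefM m (μ.mu m) < prefM m (μ'.mu m)) :
    ∃ w, μ'.mu m = some w ∧ w ∈ W' ∧ prefW w (μ'.nu w) < prefW w (μ.nu w) := by
  obtain ⟨w, hw⟩ : ∃ w, μ'.mu m = some w := by
    cases h : μ'.mu m with
    | some w => exact ⟨w, rfl⟩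
    | none =>
      rw [h] at hlt
      cases h2 : μ.mu m with
      | none => rw [h2] at hlt; exact absurd hlt (lt_irrefl _)
      | some w2 =>
        rw [h2] at hlt
        exact absurd (hlt.trans (hμ.1.1 m hm w2 h2)) (lt_irrefl _)
  have hwW' : w ∈ W' := mem_right_of_nu μ' ((μ'.consistent m w).1 hw)
  rw [hw] at hlt
  have h2 : prefW w (some m) ≤ prefW w (μ.nu w) :=
    not_lt.1 fun hc => hμ.2 m w ⟨hm, hW' hwW', hlt, hc⟩
  have h3 : prefW w (some m) ≠ prefW w (μ.nu w) := by
    intro heq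
    have := (hWp w (hW' hwW')) (some_mem_dom hm) (nu_mem_dom μ (le_refl M) w) heq
    have hmu : μ.mu m = some w := (μ.consistent m w).2 this.symm
    rw [hmu] at hlt
    exact absurd hlt (lt_irrefl _)
  have h4 : prefW w (some m) < prefW w (μ.nu w) := lt_of_le_of_ne h2 h3
  refine ⟨w, hw, hwW', ?_⟩
  rw [(μ'.consistent m w).1 hw]
  exact h4

/-- Lemma B: if `w ∈ W'` strictly prefers her big-market partner, then that partner exists,
lies in `M`, and strictly prefers his small-market partner. -/
lemma lemB (hW' : W' ⊆ W)
    (hMp : ∀ m ∈ M, StrictPref (prefM m) W)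
    (μ : Matching M W) (μ' : Matching M W')
    (hμ' : Stable M W' prefM prefW μ')
    {w : β} (hw : w ∈ W')
    (hlt : prefW w (μ'.nu w) < prefW w (μ.nu w)) :
    ∃ m, μ.nu w = some m ∧ m ∈ M ∧ prefM m (μ.mu m) < prefM m (μ'.mu m) := by
  obtain ⟨m, hm⟩ : ∃ m, μ.nu w = some m := by
    cases h : μ.nu w with
    | some m => exact ⟨m, rfl⟩
    | none =>
      rw [h] at hlt
      cases h2 : μ'.nu w with
      | none => rw [h2] at hlt; exact absurd hlt (lt_irrefl _)
      | some m2 =>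
        rw [h2] at hlt
        exact absurd (hlt.trans (hμ'.1.2 w hw m2 h2)) (lt_irrefl _)
  have hmM : m ∈ M := mem_left_of_mu μ ((μ.consistent m w).2 hm)
  rw [hm] at hlt
  have h2 : prefM m (some w) ≤ prefM m (μ'.mu m) :=
    not_lt.1 fun hc => hμ'.2 m w ⟨hmM, hw, hc, hlt⟩
  have h3 : prefM m (some w) ≠ prefM m (μ'.mu m) := by
    intro heq
    have := (hMp m hmM) (some_mem_dom (hW' hw)) (mu_mem_dom μ' hW' m) heq
    have hnu : μ'.nu w = some m := (μ'.consistent m w).1 this.symm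
    rw [hnu] at hlt
    exact absurd hlt (lt_irrefl _)
  have h4 : prefM m (some w) < prefM m (μ'.mu m) := lt_of_le_of_ne h2 h3
  have hmu : μ.mu m = some w := (μ.consistent m w).2 hm
  refine ⟨m, hm, hmM, ?_⟩
  rw [hmu]; exact h4


/-- Lemma C: the "improvement sets" `D` and `E` are in bijection; in particular the
big-market partner of any `m ∈ D` is in `E`, and the small-market partner of any
`w ∈ E` is in `D`. -/
lemma lemC (hW' : W' ⊆ W)
    (hMp : ∀ m ∈ M, StrictPref (prefM m) W)
    (hWp : ∀ w ∈ W, StrictPref (prefW w) M)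
    (μ : Matching M W) (μ' : Matching M W')
    (hμ : Stable M W prefM prefW μ)
    (hμ' : Stable M W' prefM prefW μ') :
    (∀ m ∈ M, prefM m (μ.mu m) < prefM m (μ'.mu m) →
      ∃ w, μ.mu m = some w ∧ w ∈ W' ∧ prefW w (μ'.nu w) < prefW w (μ.nu w)) ∧
    (∀ w ∈ W', prefW w (μ'.nu w) < prefW w (μ.nu w) →
      ∃ m, μ'.nu w = some m ∧ m ∈ M ∧ prefM m (μ.mu m) < prefM m (μ'.mu m)) := by
  classical
  set D := M.filter (fun m => prefM m (μ.mu m) < prefM m (μ'.mu m)) with hD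
  set E := W'.filter (fun w => prefW w (μ'.nu w) < prefW w (μ.nu w)) with hE
  have hDE : D.image μ'.mu ⊆ E.image some := by
    intro x hx
    obtain ⟨m, hmD, rfl⟩ := Finset.mem_image.1 hx
    obtain ⟨hmM, hmlt⟩ := Finset.mem_filter.1 hmD
    obtain ⟨w, hw1, hw2, hw3⟩ := lemA hW' hWp μ μ' hμ hmM hmlt
    rw [hw1]
    exact Finset.mem_image.2 ⟨w, Finset.mem_filter.2 ⟨hw2, hw3⟩, rfl⟩
  have hED : E.image μ.nu ⊆ D.image some := by
    intro x hx
    obtain ⟨w, hwE, rfl⟩ := Finset.mem_image.1 hx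
    obtain ⟨hwW', hwlt⟩ := Finset.mem_filter.1 hwE
    obtain ⟨m, hm1, hm2, hm3⟩ := lemB hW' hMp μ μ' hμ' hwW' hwlt
    rw [hm1]
    exact Finset.mem_image.2 ⟨m, Finset.mem_filter.2 ⟨hm2, hm3⟩, rfl⟩
  have hDinj : Set.InjOn μ'.mu D := by
    intro m1 h1 m2 h2 heq
    obtain ⟨hm1M, hm1lt⟩ := Finset.mem_filter.1 h1
    obtain ⟨w, hw1, _, _⟩ := lemA hW' hWp μ μ' hμ hm1M hm1lt
    have hw2 : μ'.mu m2 = some w := by rw [← heq]; exact hw1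
    have e1 := (μ'.consistent m1 w).1 hw1
    have e2 := (μ'.consistent m2 w).1 hw2
    rw [e1] at e2
    exact Option.some_injective _ e2
  have hEinj : Set.InjOn μ.nu E := by
    intro w1 h1 w2 h2 heq
    obtain ⟨hw1W, hw1lt⟩ := Finset.mem_filter.1 h1
    obtain ⟨m, hm1, _, _⟩ := lemB hW' hMp μ μ' hμ' hw1W hw1lt
    have hm2 : μ.nu w2 = some m := by rw [← heq]; exact hm1
    have e1 := (μ.consistent m w1).2 hm1
    have e2 := (μ.consistent m w2).2 hm2
    rw [e1] at e2
    exact Option.some_injective _ e2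
  have hcard1 : D.card ≤ E.card := by
    calc D.card = (D.image μ'.mu).card := (Finset.card_image_of_injOn hDinj).symm
    _ ≤ (E.image some).card := Finset.card_le_card hDE
    _ = E.card := Finset.card_image_of_injective E (Option.some_injective _)
  have hcard2 : E.card ≤ D.card := by
    calc E.card = (E.image μ.nu).card := (Finset.card_image_of_injOn hEinj).symm
    _ ≤ (D.image some).card := Finset.card_le_card hED
    _ = D.card := Finset.card_image_of_injective D (Option.some_injective _)
  have hcard : D.card = E.card := le_antisymm hcard1 hcard2
  have heq1 : D.image μ'.mu = E.image some := by
    apply Finset.eq_of_subset_of_card_le hDE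
    rw [Finset.card_image_of_injOn hDinj, Finset.card_image_of_injective E (Option.some_injective _)]
    exact hcard.ge
  have heq2 : E.image μ.nu = D.image some := by
    apply Finset.eq_of_subset_of_card_le hED
    rw [Finset.card_image_of_injOn hEinj, Finset.card_image_of_injective D (Option.some_injective _)]
    exact hcard.le
  constructor
  · intro m hmM hmlt
    have hmD : m ∈ D := Finset.mem_filter.2 ⟨hmM, hmlt⟩
    have : some m ∈ E.image μ.nu := by
      rw [heq2]; exact Finset.mem_image.2 ⟨m, hmD, rfl⟩
    obtain ⟨w, hwE, hw⟩ := Finset.mem_image.1 this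
    obtain ⟨hwW', hwlt⟩ := Finset.mem_filter.1 hwE
    exact ⟨w, (μ.consistent m w).2 hw, hwW', hwlt⟩
  · intro w hwW' hwlt
    have hwE : w ∈ E := Finset.mem_filter.2 ⟨hwW', hwlt⟩
    have : some w ∈ D.image μ'.mu := by
      rw [heq1]; exact Finset.mem_image.2 ⟨w, hwE, rfl⟩
    obtain ⟨m, hmD, hm⟩ := Finset.mem_image.1 this
    obtain ⟨hmM, hmlt⟩ := Finset.mem_filter.1 hmD
    exact ⟨m, (μ'.consistent m w).1 hm, hmM, hmlt⟩


/-- ManOpt case: if the big-market matching is M-optimal, every woman in `W'` weakly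
prefers her small-market partner. -/
lemma manopt_case (hW' : W' ⊆ W)
    (hMp : ∀ m ∈ M, StrictPref (prefM m) W)
    (hWp : ∀ w ∈ W, StrictPref (prefW w) M)
    (μ : Matching M W) (μ' : Matching M W')
    (hμ : Stable M W prefM prefW μ)
    (hμ' : Stable M W' prefM prefW μ')
    (hopt : ManOpt M W prefM prefW μ) :
    ∀ w ∈ W', prefW w (μ.nu w) ≤ prefW w (μ'.nu w) := by
  classical
  obtain ⟨C1, C2⟩ := lemC hW' hMp hWp μ μ' hμ hμ'
  set p : α → Prop := fun m => m ∈ M ∧ prefM m (μ.mu m) < prefM m (μ'.mu m) with hp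
  set q : β → Prop := fun w => w ∈ W' ∧ prefW w (μ'.nu w) < prefW w (μ.nu w) with hq
  set f : α → Option β := fun m => if p m then μ'.mu m else μ.mu m with hf
  set g : β → Option α := fun w => if q w then μ'.nu w else μ.nu w with hg
  have hfp : ∀ m, p m → f m = μ'.mu m := fun m h => by rw [hf]; exact if_pos h
  have hfn : ∀ m, ¬ p m → f m = μ.mu m := fun m h => by rw [hf]; exact if_neg h
  have hgp : ∀ w, q w → g w = μ'.nu w := fun w h => by rw [hg]; exact if_pos h
  have hgn : ∀ w, ¬ q w → g w = μ.nu w := fun w h => by rw [hg]; exact if_neg h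
  have hcons : ∀ m w, f m = some w ↔ g w = some m := by
    intro m w
    by_cases hpm : p m <;> by_cases hqw : q w
    · rw [hfp m hpm, hgp w hqw]; exact μ'.consistent m w
    · rw [hfp m hpm, hgn w hqw]
      constructor
      · intro h
        obtain ⟨w0, h1, h2, h3⟩ := lemA hW' hWp μ μ' hμ hpm.1 hpm.2
        rw [h] at h1
        obtain rfl : w = w0 := Option.some_injective _ h1
        exact absurd ⟨h2, h3⟩ hqw
      · intro h
        obtain ⟨w1, h1, h2, h3⟩ := C1 m hpm.1 hpm.2
        have : μ.mu m = some w := (μ.consistent m w).2 h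
        rw [this] at h1
        obtain rfl : w = w1 := Option.some_injective _ h1
        exact absurd ⟨h2, h3⟩ hqw
    · rw [hfn m hpm, hgp w hqw]
      constructor
      · intro h
        obtain ⟨m0, h1, h2, h3⟩ := lemB hW' hMp μ μ' hμ' hqw.1 hqw.2
        have : μ.nu w = some m := (μ.consistent m w).1 h
        rw [this] at h1
        obtain rfl : m = m0 := Option.some_injective _ h1
        exact absurd ⟨h2, h3⟩ hpm
      · intro h
        obtain ⟨m1, h1, h2, h3⟩ := C2 w hqw.1 hqw.2
        rw [h] at h1
        obtain rfl : m = m1 := Option.some_injective _ h1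
        exact absurd ⟨h2, h3⟩ hpm
    · rw [hfn m hpm, hgn w hqw]; exact μ.consistent m w
  have hsM : ∀ m, m ∉ M → f m = none := by
    intro m hm
    rw [hfn m (fun hc => hm hc.1)]
    exact μ.suppM m hm
  have hsW : ∀ w, w ∉ W → g w = none := by
    intro w hw
    rw [hgn w (fun hc => hw (hW' hc.1))]
    exact μ.suppW w hw
  let ν : Matching M W := ⟨f, g, hcons, hsM, hsW⟩
  have hfle : ∀ m, prefM m (μ.mu m) ≤ prefM m (f m) := by
    intro m
    by_cases hpm : p m
    · rw [hfp m hpm]; exact le_of_lt hpm.2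
    · rw [hfn m hpm]
  have hfle' : ∀ m ∈ M, prefM m (μ'.mu m) ≤ prefM m (f m) := by
    intro m hm
    by_cases hpm : p m
    · rw [hfp m hpm]
    · rw [hfn m hpm]
      exact not_lt.1 fun hc => hpm ⟨hm, hc⟩
  have hstable : Stable M W prefM prefW ν := by
    refine ⟨⟨?_, ?_⟩, ?_⟩
    · intro m hm w h
      by_cases hpm : p m
      · exact hμ'.1.1 m hm w (by rw [← hfp m hpm]; exact h)
      · exact hμ.1.1 m hm w (by rw [← hfn m hpm]; exact h)
    · intro w hw m h
      by_cases hqw : q w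
      · exact hμ'.1.2 w hqw.1 m (by rw [← hgp w hqw]; exact h)
      · exact hμ.1.2 w hw m (by rw [← hgn w hqw]; exact h)
    · rintro m w ⟨hm, hw, hb1, hb2⟩
      have hb1' : prefM m (μ.mu m) < prefM m (some w) := lt_of_le_of_lt (hfle m) hb1
      have h5 : prefW w (some m) ≤ prefW w (μ.nu w) :=
        not_lt.1 fun hc => hμ.2 m w ⟨hm, hw, hb1', hc⟩
      by_cases hqw : q w
      · refine hμ'.2 m w ⟨hm, hqw.1, lt_of_le_of_lt (hfle' m hm) hb1, ?_⟩
        rw [← hgp w hqw]; exact hb2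
      · have hb2' : prefW w (g w) < prefW w (some m) := hb2
        rw [hgn w hqw] at hb2'
        exact absurd (lt_of_lt_of_le hb2' h5) (lt_irrefl _)
  intro w hw
  by_contra hcon
  have hqw : q w := ⟨hw, lt_of_not_ge hcon⟩
  obtain ⟨m, h1, h2, h3⟩ := C2 w hqw.1 hqw.2
  have := hopt.2 ν hstable m h2
  have hfm : prefM m (μ'.mu m) ≤ prefM m (μ.mu m) := le_trans (hfle' m h2) this
  exact absurd (lt_of_lt_of_le h3 hfm) (lt_irrefl _)

/-- WomanOpt case: if the small-market matching is W-optimal, every woman in `W'` weakly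
prefers her small-market partner. -/
lemma womanopt_case (hW' : W' ⊆ W)
    (hMp : ∀ m ∈ M, StrictPref (prefM m) W)
    (hWp : ∀ w ∈ W, StrictPref (prefW w) M)
    (μ : Matching M W) (μ' : Matching M W')
    (hμ : Stable M W prefM prefW μ)
    (hμ' : Stable M W' prefM prefW μ')
    (hopt' : WomanOpt M W' prefM prefW μ') :
    ∀ w ∈ W', prefW w (μ.nu w) ≤ prefW w (μ'.nu w) := by
  classical
  obtain ⟨C1, C2⟩ := lemC hW' hMp hWp μ μ' hμ hμ'
  set p : α → Prop := fun m => m ∈ M ∧ prefM m (μ.mu m) < prefM m (μ'.mu m) with hp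
  set q : β → Prop := fun w => w ∈ W' ∧ prefW w (μ'.nu w) < prefW w (μ.nu w) with hq
  set f : α → Option β := fun m => if p m then μ.mu m else μ'.mu m with hf
  set g : β → Option α := fun w => if q w then μ.nu w else μ'.nu w with hg
  have hfp : ∀ m, p m → f m = μ.mu m := fun m h => by rw [hf]; exact if_pos h
  have hfn : ∀ m, ¬ p m → f m = μ'.mu m := fun m h => by rw [hf]; exact if_neg h
  have hgp : ∀ w, q w → g w = μ.nu w := fun w h => by rw [hg]; exact if_pos h
  have hgn : ∀ w, ¬ q w → g w = μ'.nu w := fun w h => by rw [hg]; exact if_neg h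
  have hcons : ∀ m w, f m = some w ↔ g w = some m := by
    intro m w
    by_cases hpm : p m <;> by_cases hqw : q w
    · rw [hfp m hpm, hgp w hqw]; exact μ.consistent m w
    · rw [hfp m hpm, hgn w hqw]
      constructor
      · intro h
        obtain ⟨w1, h1, h2, h3⟩ := C1 m hpm.1 hpm.2
        rw [h] at h1
        obtain rfl : w = w1 := Option.some_injective _ h1
        exact absurd ⟨h2, h3⟩ hqw
      · intro h
        obtain ⟨w0, h1, h2, h3⟩ := lemA hW' hWp μ μ' hμ hpm.1 hpm.2
        have : μ'.mu m = some w := (μ'.consistent m w).2 h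
        rw [this] at h1
        obtain rfl : w = w0 := Option.some_injective _ h1
        exact absurd ⟨h2, h3⟩ hqw
    · rw [hfn m hpm, hgp w hqw]
      constructor
      · intro h
        obtain ⟨m1, h1, h2, h3⟩ := C2 w hqw.1 hqw.2
        have : μ'.nu w = some m := (μ'.consistent m w).1 h
        rw [this] at h1
        obtain rfl : m = m1 := Option.some_injective _ h1
        exact absurd ⟨h2, h3⟩ hpm
      · intro h
        obtain ⟨m0, h1, h2, h3⟩ := lemB hW' hMp μ μ' hμ' hqw.1 hqw.2
        rw [h] at h1
        obtain rfl : m = m0 := Option.some_injective _ h1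
        exact absurd ⟨h2, h3⟩ hpm
    · rw [hfn m hpm, hgn w hqw]; exact μ'.consistent m w
  have hsM : ∀ m, m ∉ M → f m = none := by
    intro m hm
    rw [hfn m (fun hc => hm hc.1)]
    exact μ'.suppM m hm
  have hsW : ∀ w, w ∉ W' → g w = none := by
    intro w hw
    rw [hgn w (fun hc => hw hc.1)]
    exact μ'.suppW w hw
  let ρ : Matching M W' := ⟨f, g, hcons, hsM, hsW⟩
  have hgle : ∀ w ∈ W', prefW w (μ.nu w) ≤ prefW w (g w) := by
    intro w hw
    by_cases hqw : q w
    · rw [hgp w hqw]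
    · rw [hgn w hqw]
      exact not_lt.1 fun hc => hqw ⟨hw, hc⟩
  have hgle' : ∀ w, prefW w (μ'.nu w) ≤ prefW w (g w) := by
    intro w
    by_cases hqw : q w
    · rw [hgp w hqw]; exact le_of_lt hqw.2
    · rw [hgn w hqw]
  have hstable : Stable M W' prefM prefW ρ := by
    refine ⟨⟨?_, ?_⟩, ?_⟩
    · intro m hm w h
      by_cases hpm : p m
      · exact hμ.1.1 m hm w (by rw [← hfp m hpm]; exact h)
      · exact hμ'.1.1 m hm w (by rw [← hfn m hpm]; exact h)
    · intro w hw m h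
      by_cases hqw : q w
      · exact hμ.1.2 w (hW' hw) m (by rw [← hgp w hqw]; exact h)
      · exact hμ'.1.2 w hw m (by rw [← hgn w hqw]; exact h)
    · rintro m w ⟨hm, hw, hb1, hb2⟩
      have hb2a : prefW w (μ.nu w) < prefW w (some m) := lt_of_le_of_lt (hgle w hw) hb2
      have hb2b : prefW w (μ'.nu w) < prefW w (some m) := lt_of_le_of_lt (hgle' w) hb2
      have h5 : prefM m (some w) ≤ prefM m (μ.mu m) :=
        not_lt.1 fun hc => hμ.2 m w ⟨hm, hW' hw, hc, hb2a⟩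
      have h6 : prefM m (some w) ≤ prefM m (μ'.mu m) :=
        not_lt.1 fun hc => hμ'.2 m w ⟨hm, hw, hc, hb2b⟩
      have hb1' : prefM m (f m) < prefM m (some w) := hb1
      by_cases hpm : p m
      · rw [hfp m hpm] at hb1'
        exact absurd (lt_of_lt_of_le hb1' h5) (lt_irrefl _)
      · rw [hfn m hpm] at hb1'
        exact absurd (lt_of_lt_of_le hb1' h6) (lt_irrefl _)
  intro w hw
  have h1 := hopt'.2 ρ hstable w hw
  exact le_trans (hgle w hw) h1


end Aux

variable {α σ γ : Type*}

/-- In the PhD algorithm (advisors `A`, students `S`, co-advisors `C`),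
where on each of the two submarkets a fixed-side optimal (Gale–Shapley) stable matching
is used at every iteration, a student's match on the advisor–student market can only
improve over iterations (iterations are indexed from `0`, so index `τ` vs `τ + 1`
corresponds to the paper's `τ − 1` vs `τ` for `τ ≥ 2`); consequently
`S_m^(τ−1) \ S_u^(τ−1) ⊆ S_m^(τ)`. -/
theorem student_advisor_match_improves
    (A : Finset α) (S : Finset σ) (C : Finset γ)
    (prefA : α → Option σ → ℕ) (prefC : γ → Option σ → ℕ)
    (prefSA : σ → Option α → ℕ) (prefSC : σ → Option γ → ℕ)
    (hA : ∀ a ∈ A, StrictPref (prefA a) S)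
    (hC : ∀ c ∈ C, StrictPref (prefC c) S)
    (hSA : ∀ s ∈ S, StrictPref (prefSA s) A)
    (hSC : ∀ s ∈ S, StrictPref (prefSC s) C)
    -- one run of the PhD algorithm:
    (Sseq Sm Su : ℕ → Finset σ)
    (μAS : (τ : ℕ) → Matching A (Sseq τ))
    (μSC : (τ : ℕ) → Matching (Sm τ) C)
    (hS0 : Sseq 0 = S)
    (hSm : ∀ τ, Sm τ = (Sseq τ).filter fun s => ((μAS τ).nu s).isSome)
    (hSu : ∀ τ, Su τ = (Sm τ).filter fun s => ¬ ((μSC τ).mu s).isSome)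
    (hnext : ∀ τ, Sseq (τ + 1) = Sseq τ \ Su τ)
    -- the same side proposes at every iteration on each submarket:
    (hoptAS : (∀ τ, ManOpt A (Sseq τ) prefA prefSA (μAS τ)) ∨
              (∀ τ, WomanOpt A (Sseq τ) prefA prefSA (μAS τ)))
    (hoptSC : (∀ τ, ManOpt (Sm τ) C prefSC prefC (μSC τ)) ∨
              (∀ τ, WomanOpt (Sm τ) C prefSC prefC (μSC τ))) :
    (∀ τ, ∀ s ∈ Sseq (τ + 1),
        prefSA s ((μAS τ).nu s) ≤ prefSA s ((μAS (τ + 1)).nu s)) ∧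
    (∀ τ, Sm τ \ Su τ ⊆ Sm (τ + 1)) := by
  have hsub : ∀ τ, Sseq (τ + 1) ⊆ Sseq τ := by
    intro τ
    rw [hnext]
    exact Finset.sdiff_subset
  have hsubS : ∀ τ, Sseq τ ⊆ S := by
    intro τ
    induction τ with
    | zero => rw [hS0]
    | succ n ih => exact (hsub n).trans ih
  have hMp : ∀ τ, ∀ a ∈ A, StrictPref (prefA a) (Sseq τ) := by
    intro τ a ha
    exact (hA a ha).mono (Set.insert_subset_insert
      (Set.image_mono (Finset.coe_subset.2 (hsubS τ))))
  have hWp : ∀ τ, ∀ s ∈ Sseq τ, StrictPref (prefSA s) A := fun τ s hs => hSA s (hsubS τ hs)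
  have hstab : ∀ τ, Stable A (Sseq τ) prefA prefSA (μAS τ) := by
    intro τ
    rcases hoptAS with hopt | hopt
    · exact (hopt τ).1
    · exact (hopt τ).1
  have part1 : ∀ τ, ∀ s ∈ Sseq (τ + 1),
      prefSA s ((μAS τ).nu s) ≤ prefSA s ((μAS (τ + 1)).nu s) := by
    intro τ s hs
    rcases hoptAS with hopt | hopt
    · exact manopt_case (hsub τ) (hMp τ) (hWp τ) (μAS τ) (μAS (τ + 1))
        (hstab τ) (hstab (τ + 1)) (hopt τ) s hs
    · exact womanopt_case (hsub τ) (hMp τ) (hWp τ) (μAS τ) (μAS (τ + 1))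
        (hstab τ) (hstab (τ + 1)) (hopt (τ + 1)) s hs
  refine ⟨part1, ?_⟩
  intro τ s hs
  rw [Finset.mem_sdiff] at hs
  obtain ⟨hsm, hsu⟩ := hs
  have hsm' := hsm
  rw [hSm τ, Finset.mem_filter] at hsm'
  obtain ⟨hsseq, hsome⟩ := hsm'
  have hsnext : s ∈ Sseq (τ + 1) := by
    rw [hnext]
    exact Finset.mem_sdiff.2 ⟨hsseq, hsu⟩
  obtain ⟨a, ha⟩ := Option.isSome_iff_exists.1 hsome
  have hIR : prefSA s none < prefSA s (some a) := (hstab τ).1.2 s hsseq a ha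
  have h := part1 τ s hsnext
  rw [ha] at h
  rw [hSm (τ + 1), Finset.mem_filter]
  refine ⟨hsnext, ?_⟩
  cases h2 : (μAS (τ + 1)).nu s with
  | none =>
    rw [h2] at h
    exact absurd (lt_of_lt_of_le hIR h) (lt_irrefl _)
  | some b => rfl



end Stmt3
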